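/- Let L be a shellable simplicial complex and let v be a vertex of L (i.e. {v} ∈ L). Then the link lk_L(v) := {σ : v ∉ σ and σ ∪ {v} ∈ L} is shellable. -/

import Mathlib

open Finset

/-- A simplicial complex: a collection of subsets of the vertex set, closed under
taking subsets and containing the empty set. -/
def IsComplex {V : Type*} (K : Set (Finset V)) : Prop :=
  ∅ ∈ K ∧ ∀ σ ∈ K, ∀ τ ⊆ σ, τ ∈ K

/-- `F` is a facet (maximal face) of `K`. -/
def IsFacet {V : Type*} (K : Set (Finset V)) (F : Finset V) : Prop :=
  F ∈ K ∧ ∀ G ∈ K, F ⊆ G → F = G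

/-- `L` is a shelling of `K`: a duplicate-free enumeration of all facets of `K` such that
for each `k ≥ 2` (here `k ≥ 1` in 0-indexed form), the collection
`{σ ⊆ F_k : σ ⊆ F_j for some j < k}` is nonempty and each of its maximal elements has
cardinality `|F_k| - 1`. -/
def IsShelling {V : Type*} (K : Set (Finset V)) (L : List (Finset V)) : Prop :=
  L.Nodup ∧ (∀ F, F ∈ L ↔ IsFacet K F) ∧
    ∀ k : Fin L.length, 1 ≤ (k : ℕ) →
      (∃ σ : Finset V, σ ⊆ L.get k ∧ ∃ j : Fin L.length, (j : ℕ) < (k : ℕ) ∧ σ ⊆ L.get j) ∧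
      ∀ σ : Finset V,
        (σ ⊆ L.get k ∧ ∃ j : Fin L.length, (j : ℕ) < (k : ℕ) ∧ σ ⊆ L.get j) →
        (∀ ρ : Finset V,
          (ρ ⊆ L.get k ∧ ∃ j : Fin L.length, (j : ℕ) < (k : ℕ) ∧ ρ ⊆ L.get j) →
            σ ⊆ ρ → σ = ρ) →
        σ.card + 1 = (L.get k).card

/-- A (possibly void) simplicial complex is shellable if it admits a shelling. -/
def Shellable {V : Type*} (K : Set (Finset V)) : Prop :=
  ∃ L, IsShelling K L

lemma union_singleton_eq {V : Type*} [DecidableEq V] (s : Finset V) (v : V) :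
    s ∪ {v} = insert v s := by
  ext x; simp [or_comm]

lemma exists_max_finset {V : Type*} [Fintype V] (P : Finset V → Prop) {τ0 : Finset V}
    (h : P τ0) : ∃ τ, P τ ∧ τ0 ⊆ τ ∧ ∀ ρ, P ρ → τ ⊆ ρ → τ = ρ := by
  obtain ⟨τ, ⟨hP, hsub⟩, hmax⟩ := Set.Finite.exists_maximalFor id {ρ | P ρ ∧ τ0 ⊆ ρ}
    (Set.toFinite _) ⟨τ0, h, subset_rfl⟩
  exact ⟨τ, hP, hsub, fun ρ hρ hs => hs.antisymm (hmax ⟨hρ, hsub.trans hs⟩ hs)⟩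

lemma idxOf_filter_lt {α : Type*} [DecidableEq α] (p : α → Bool) :
    ∀ (l : List α), l.Nodup → ∀ a b : α, a ∈ l.filter p → b ∈ l.filter p →
    (l.filter p).idxOf a < (l.filter p).idxOf b → l.idxOf a < l.idxOf b := by
  intro l
  induction l with
  | nil => simp
  | cons x t ih =>
    intro hnd a b ha hb hlt
    rw [List.nodup_cons] at hnd
    by_cases hpx : p x
    · rw [List.filter_cons_of_pos hpx] at ha hb hlt
      by_cases hax : a = x
      · have hbx : b ≠ x := by
          rintro rfl
          rw [List.idxOf_cons_eq _ hax.symm, List.idxOf_cons_self] at hlt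
          omega
        rw [List.idxOf_cons_eq _ hax.symm, List.idxOf_cons_ne _ (Ne.symm hbx)]
        omega
      · have hbx : b ≠ x := by
          rintro rfl
          rw [List.idxOf_cons_self] at hlt; omega
        rw [List.idxOf_cons_ne _ (Ne.symm hax), List.idxOf_cons_ne _ (Ne.symm hbx)] at hlt
        rw [List.idxOf_cons_ne _ (Ne.symm hax), List.idxOf_cons_ne _ (Ne.symm hbx)]
        have := ih hnd.2 a b (by simpa [List.mem_cons, hax] using ha)
          (by simpa [List.mem_cons, hbx] using hb) (by omega)
        omega
    · rw [List.filter_cons_of_neg hpx] at ha hb hlt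
      have hax : a ≠ x := by rintro rfl; exact hpx (List.of_mem_filter ha)
      have hbx : b ≠ x := by rintro rfl; exact hpx (List.of_mem_filter hb)
      rw [List.idxOf_cons_ne _ (Ne.symm hax), List.idxOf_cons_ne _ (Ne.symm hbx)]
      have := ih hnd.2 a b ha hb hlt
      omega

lemma idxOf_filter_lt_iff {α : Type*} [DecidableEq α] (p : α → Bool) (l : List α)
    (hnd : l.Nodup) {a b : α} (ha : a ∈ l.filter p) (hb : b ∈ l.filter p) :
    (l.filter p).idxOf a < (l.filter p).idxOf b ↔ l.idxOf a < l.idxOf b := by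
  constructor
  · exact idxOf_filter_lt p l hnd a b ha hb
  · intro h
    rcases Nat.lt_trichotomy ((l.filter p).idxOf a) ((l.filter p).idxOf b) with h1 | h1 | h1
    · exact h1
    · exact absurd ((List.idxOf_inj ha).1 h1) (fun e => by subst e; omega)
    · have := idxOf_filter_lt p l hnd b a hb ha h1
      omega

/-- If `L` is a shellable simplicial complex and `v` is a vertex of `L`, then the link
`lk_L(v) = {σ : v ∉ σ ∧ σ ∪ {v} ∈ L}` is shellable. -/
theorem link_shellable_of_shellable {V : Type*} [DecidableEq V] [Fintype V]
    (L : Set (Finset V)) (hL : IsComplex L) (v : V) (hv : ({v} : Finset V) ∈ L)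
    (hshell : Shellable L) :
    Shellable {σ : Finset V | v ∉ σ ∧ σ ∪ {v} ∈ L} := by
  obtain ⟨l, hnd, hfac, hcond⟩ := hshell
  set p : Finset V → Bool := fun F => decide (v ∈ F) with hp
  set lf : List (Finset V) := l.filter p with hlf
  set l' : List (Finset V) := lf.map (fun F => F.erase v) with hl'
  have hmemlf : ∀ F : Finset V, F ∈ lf ↔ F ∈ l ∧ v ∈ F := by
    intro F; simp [hlf, List.mem_filter, hp]
  have hndlf : lf.Nodup := hnd.filter p
  -- every face of L is contained in a facet
  have hext : ∀ τ ∈ L, ∃ G, IsFacet L G ∧ τ ⊆ G := by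
    intro τ hτ
    obtain ⟨G, hG, hsub, hmax⟩ := exists_max_finset (· ∈ L) hτ
    exact ⟨G, ⟨hG, hmax⟩, hsub⟩
  refine ⟨l', ?_, ?_, ?_⟩
  · -- Nodup
    refine hndlf.map_on ?_
    intro x hx y hy hxy
    have hvx : v ∈ x := ((hmemlf x).1 hx).2
    have hvy : v ∈ y := ((hmemlf y).1 hy).2
    rw [← Finset.insert_erase hvx, ← Finset.insert_erase hvy, hxy]
  · -- facets of the link
    intro F'
    constructor
    · intro hF'
      obtain ⟨F, hFlf, rfl⟩ := List.mem_map.1 hF'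
      obtain ⟨hFl, hvF⟩ := (hmemlf F).1 hFlf
      have hFfac : IsFacet L F := (hfac F).1 hFl
      constructor
      · refine ⟨Finset.notMem_erase _ _, ?_⟩
        rw [union_singleton_eq, Finset.insert_erase hvF]
        exact hFfac.1
      · intro G hG hsub
        have hG' : v ∉ G ∧ G ∪ {v} ∈ L := hG
        have hFG : F ⊆ G ∪ {v} := by
          rw [union_singleton_eq]
          calc F = insert v (F.erase v) := (Finset.insert_erase hvF).symm
          _ ⊆ insert v G := Finset.insert_subset_insert _ hsub
        have := hFfac.2 _ hG'.2 hFG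
        rw [this, union_singleton_eq, Finset.erase_insert hG'.1]
    · intro hF'fac
      obtain ⟨⟨hvF', hF'L⟩, hmax⟩ := hF'fac
      obtain ⟨G, hGfac, hsub⟩ := hext _ hF'L
      have hvG : v ∈ G := hsub (by simp)
      have hGe : G.erase v ∈ {σ : Finset V | v ∉ σ ∧ σ ∪ {v} ∈ L} := by
        refine ⟨Finset.notMem_erase _ _, ?_⟩
        rw [union_singleton_eq, Finset.insert_erase hvG]
        exact hGfac.1
      have hF'sub : F' ⊆ G.erase v :=
        Finset.subset_erase.2 ⟨(Finset.subset_union_left).trans hsub, hvF'⟩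
      have hEq : F' = G.erase v := hmax _ hGe hF'sub
      refine List.mem_map.2 ⟨G, (hmemlf G).2 ⟨(hfac G).2 hGfac, hvG⟩, hEq.symm⟩
  · -- shelling condition
    intro k' hk'
    have hlen : l'.length = lf.length := List.length_map _
    have hk'lf : (k' : ℕ) < lf.length := by rw [← hlen]; exact k'.isLt
    set F : Finset V := lf.get ⟨k', hk'lf⟩ with hF
    have hFlf : F ∈ lf := List.get_mem _ _
    obtain ⟨hFl, hvF⟩ := (hmemlf F).1 hFlf
    have hgetk' : l'.get k' = F.erase v := by
      simp [hl', List.get_eq_getElem, hF]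
    have hkF : lf.idxOf F = (k' : ℕ) := by
      simpa [hF] using List.get_idxOf hndlf ⟨k', hk'lf⟩
    have hkl : l.idxOf F < l.length := List.idxOf_lt_length_iff.2 hFl
    set kk : Fin l.length := ⟨l.idxOf F, hkl⟩ with hkk
    have hgetkk : l.get kk = F := List.idxOf_get hkl
    -- index of earlier facets-containing-v
    have hearlier : ∀ G ∈ lf, lf.idxOf G < (k' : ℕ) → l.idxOf G < (kk : ℕ) := by
      intro G hG hGlt
      exact idxOf_filter_lt p l hnd G F hG hFlf (by rw [hkF]; exact hGlt)
    have hlater : ∀ G ∈ lf, l.idxOf G < (kk : ℕ) → lf.idxOf G < (k' : ℕ) := by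
      intro G hG hGlt
      rw [← hkF]
      exact (idxOf_filter_lt_iff p l hnd hG hFlf).2 hGlt
    have hk1 : 1 ≤ (kk : ℕ) := by
      have h0 : (0 : ℕ) < lf.length := lt_of_le_of_lt (Nat.zero_le _) hk'lf
      have hGlf : lf.get ⟨0, h0⟩ ∈ lf := List.get_mem _ _
      have h1 : lf.idxOf (lf.get ⟨0, h0⟩) = 0 := by
        simpa using List.get_idxOf hndlf ⟨0, h0⟩
      have h2 : l.idxOf (lf.get ⟨0, h0⟩) < (kk : ℕ) := hearlier _ hGlf (by omega)
      omega
    -- translation of the overlap condition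
    have htrans : ∀ σ : Finset V, v ∉ σ →
        ((σ ⊆ l'.get k' ∧ ∃ j' : Fin l'.length, (j' : ℕ) < (k' : ℕ) ∧ σ ⊆ l'.get j') ↔
         (σ ∪ {v} ⊆ l.get kk ∧ ∃ j : Fin l.length, (j : ℕ) < (kk : ℕ) ∧ σ ∪ {v} ⊆ l.get j)) := by
      intro σ hvσ
      constructor
      · rintro ⟨hσk, j', hj'lt, hσj'⟩
        have hj'lf : (j' : ℕ) < lf.length := by rw [← hlen]; exact j'.isLt
        set G : Finset V := lf.get ⟨j', hj'lf⟩ with hG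
        have hGlf : G ∈ lf := List.get_mem _ _
        obtain ⟨hGl, hvG⟩ := (hmemlf G).1 hGlf
        have hgetj' : l'.get j' = G.erase v := by
          simp [hl', List.get_eq_getElem, hG]
        rw [hgetj'] at hσj'
        rw [hgetk'] at hσk
        have hjG : lf.idxOf G = (j' : ℕ) := by
          simpa [hG] using List.get_idxOf hndlf ⟨j', hj'lf⟩
        have hjl : l.idxOf G < l.length := List.idxOf_lt_length_iff.2 hGl
        refine ⟨?_, ⟨l.idxOf G, hjl⟩, ?_, ?_⟩
        · rw [hgetkk]
          exact Finset.union_subset (hσk.trans (Finset.erase_subset _ _))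
            (Finset.singleton_subset_iff.2 hvF)
        · exact hearlier G hGlf (by rw [hjG]; exact hj'lt)
        · rw [List.idxOf_get hjl]
          exact Finset.union_subset (hσj'.trans (Finset.erase_subset _ _))
            (Finset.singleton_subset_iff.2 hvG)
      · rintro ⟨hσk, j, hjlt, hσj⟩
        set G : Finset V := l.get j with hG
        have hGl : G ∈ l := List.get_mem _ _
        have hvG : v ∈ G := hσj (by simp)
        have hGlf : G ∈ lf := (hmemlf G).2 ⟨hGl, hvG⟩
        have hjG : l.idxOf G = (j : ℕ) := by
          simpa [hG] using List.get_idxOf hnd j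
        have hlfG : lf.idxOf G < (k' : ℕ) := hlater G hGlf (by rw [hjG]; exact hjlt)
        have hlfGlen : lf.idxOf G < lf.length := List.idxOf_lt_length_iff.2 hGlf
        refine ⟨?_, ⟨lf.idxOf G, by rw [hlen]; exact hlfGlen⟩, hlfG, ?_⟩
        · rw [hgetk']
          refine Finset.subset_erase.2 ⟨?_, hvσ⟩
          rw [hgetkk] at hσk
          exact (Finset.subset_union_left).trans hσk
        · have hgetj' : l'.get ⟨lf.idxOf G, by rw [hlen]; exact hlfGlen⟩ = G.erase v := by
            simp [hl', List.get_eq_getElem, List.idxOf_get hlfGlen]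
          rw [hgetj']
          exact Finset.subset_erase.2 ⟨(Finset.subset_union_left).trans hσj, hvσ⟩
    constructor
    · -- nonempty
      refine ⟨∅, Finset.empty_subset _, ⟨0, lt_of_le_of_lt (Nat.zero_le _) k'.isLt⟩, ?_,
        Finset.empty_subset _⟩
      exact hk'
    · -- maximal overlap faces have the right cardinality
      intro σ hσ hmaxσ
      have hvσ : v ∉ σ := by
        have := hσ.1
        rw [hgetk'] at this
        exact fun hvs => Finset.notMem_erase v F (this hvs)
      have hτ0 := (htrans σ hvσ).1 hσ
      set P : Finset V → Prop := fun τ =>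
        τ ⊆ l.get kk ∧ ∃ j : Fin l.length, (j : ℕ) < (kk : ℕ) ∧ τ ⊆ l.get j with hP
      obtain ⟨τ, hPτ, hτ0τ, hτmax⟩ := exists_max_finset P hτ0
      have hcard := (hcond kk hk1).2 τ hPτ (fun ρ hρ hsub => hτmax ρ hρ hsub)
      have hvτ : v ∈ τ := hτ0τ (by simp)
      have hστ : σ ⊆ τ.erase v :=
        Finset.subset_erase.2 ⟨(Finset.subset_union_left).trans hτ0τ, hvσ⟩
      have hτS' : (τ.erase v ⊆ l'.get k' ∧
          ∃ j' : Fin l'.length, (j' : ℕ) < (k' : ℕ) ∧ τ.erase v ⊆ l'.get j') := by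
        refine (htrans (τ.erase v) (Finset.notMem_erase _ _)).2 ?_
        rw [union_singleton_eq, Finset.insert_erase hvτ]
        exact hPτ
      have hσeq : σ = τ.erase v := hmaxσ _ hτS' hστ
      have h1 : σ.card = τ.card - 1 := by rw [hσeq, Finset.card_erase_of_mem hvτ]
      have h2 : (l'.get k').card = F.card - 1 := by
        rw [hgetk', Finset.card_erase_of_mem hvF]
      have h3 : 1 ≤ τ.card := Finset.card_pos.2 ⟨v, hvτ⟩
      rw [hgetkk] at hcard
      omega
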